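/- Let f and f' be flags of [n] of type T that are non-opposite. Then for any i, j ∈ [n], the shifted flags S_{i,j}(f) and S_{i,j}(f') are also non-opposite. -/

import Mathlib

open Finset

/-- The ground set `[n] = {1,…,n}`. -/
def Iv (n : ℕ) : Finset ℕ := Finset.Icc 1 n

/-- Two subsets of `[n]` are opposite if they meet trivially or their union is `[n]`. -/
def OppSet (n : ℕ) (X Y : Finset ℕ) : Prop := X ∩ Y = ∅ ∨ X ∪ Y = Iv n

/-- A flag of type `T` of `[n]`: a chain of non-empty proper subsets of `[n]`
whose set of sizes is `T`. -/
def IsFlagT (n : ℕ) (T : Finset ℕ) (f : Finset (Finset ℕ)) : Prop :=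
  (∀ X ∈ f, X ⊆ Iv n ∧ X.Nonempty ∧ X ≠ Iv n) ∧
  (∀ X ∈ f, ∀ Y ∈ f, X ⊆ Y ∨ Y ⊆ X) ∧
  f.image Finset.card = T

/-- Two flags are opposite iff all their members are pairwise opposite. -/
def OppFlags (n : ℕ) (f g : Finset (Finset ℕ)) : Prop :=
  ∀ X ∈ f, ∀ Y ∈ g, OppSet n X Y

/-- An independent set of flags: pairwise non-opposite. -/
def IndepT (n : ℕ) (F : Finset (Finset (Finset ℕ))) : Prop :=
  ∀ f ∈ F, ∀ g ∈ F, ¬ OppFlags n f g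

/-- The `i,j`-shift of a subset `A` of `[n]`. -/
def shift (i j : ℕ) (A : Finset ℕ) : Finset ℕ :=
  if i ∈ A ∧ j ∉ A then insert j (A.erase i) else A

/-- The `i,j`-shift of a flag, applied pointwise. -/
def shiftFlag (i j : ℕ) (f : Finset (Finset ℕ)) : Finset (Finset ℕ) :=
  f.image (shift i j)

/-- The `i,j`-shift of a set of flags. -/
def shiftFam (i j : ℕ) (F : Finset (Finset (Finset ℕ))) :
    Finset (Finset (Finset ℕ)) :=
  F.image (fun f => if shiftFlag i j f ∈ F then f else shiftFlag i j f)


lemma card_shift (i j : ℕ) (A : Finset ℕ) : (shift i j A).card = A.card := by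
  unfold shift
  split
  · next h =>
    rw [card_insert_of_notMem (fun hj => h.2 (mem_of_mem_erase hj)),
      card_erase_of_mem h.1]
    have : 0 < A.card := card_pos.2 ⟨i, h.1⟩
    omega
  · rfl

lemma shift_inter_subset (i j : ℕ) (A B : Finset ℕ) :
    shift i j (A ∩ B) ⊆ shift i j A ∩ shift i j B := by
  unfold shift
  split_ifs with h1 h2 h3 h2 h3 <;> intro x hx <;>
    simp only [mem_inter, mem_insert, mem_erase, not_and, not_not] at * <;>
    by_cases hij : x = j <;> by_cases hxi : x = i <;> subst_vars <;> tauto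

lemma shift_subset_Iv (n i j : ℕ) (hj : j ∈ Iv n) (A : Finset ℕ) (hA : A ⊆ Iv n) :
    shift i j A ⊆ Iv n := by
  unfold shift
  split
  · exact insert_subset hj ((erase_subset _ _).trans hA)
  · exact hA

/-- if two flags of type `T` of `[n]` are non-opposite, then so are
their `i,j`-shifts. -/
theorem stmt_6 (n : ℕ) (T : Finset ℕ) (i j : ℕ) (hi : i ∈ Iv n) (hj : j ∈ Iv n)
    (f f' : Finset (Finset ℕ)) (hf : IsFlagT n T f) (hf' : IsFlagT n T f')
    (h : ¬ OppFlags n f f') :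
    ¬ OppFlags n (shiftFlag i j f) (shiftFlag i j f') := by
  simp only [OppFlags, not_forall] at h
  obtain ⟨X, hX, Y, hY, hO⟩ := h
  unfold OppSet at hO
  push_neg at hO
  obtain ⟨hne, hun⟩ := hO
  intro hOpp
  have hOS := hOpp (shift i j X) (mem_image_of_mem _ hX) (shift i j Y)
    (mem_image_of_mem _ hY)
  have hXI := hf.1 X hX
  have hYI := hf'.1 Y hY
  have hcInter : (X ∩ Y).card ≤ (shift i j X ∩ shift i j Y).card := by
    rw [← card_shift i j (X ∩ Y)]
    exact card_le_card (shift_inter_subset i j X Y)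
  have h1 : 0 < (X ∩ Y).card := card_pos.2 hne
  have hIvcard : (Iv n).card = n := by simp [Iv]
  have hUlt : (X ∪ Y).card < n := by
    rw [← hIvcard]
    exact card_lt_card (Finset.ssubset_iff_subset_ne.2 ⟨union_subset hXI.1 hYI.1, hun⟩)
  have e1 : (X ∪ Y).card + (X ∩ Y).card = X.card + Y.card :=
    card_union_add_card_inter X Y
  have e2 : (shift i j X ∪ shift i j Y).card + (shift i j X ∩ shift i j Y).card
      = X.card + Y.card := by
    rw [card_union_add_card_inter, card_shift, card_shift]
  rcases hOS with hOS | hOS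
  · have : (shift i j X ∩ shift i j Y).card = 0 := by rw [hOS]; rfl
    omega
  · have : (shift i j X ∪ shift i j Y).card = n := by rw [hOS, hIvcard]
    omega
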